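/- arXiv:1505.01804 — 3 statements merged into one kernel-verified Lean document; each statement's English description precedes it below -/
import Mathlib

section
/- Let φ(t) = t·L(t) be a Young function, where L:[0,∞)→[0,∞) is nondecreasing, locally Lipschitz on (0,∞), and satisfies t·L′(t) ≤ C for almost every t > 0, for some constant C ≥ 1. Then the complementary function ψ of φ satisfies ψ(L(t)) ≤ C·t for all t > 0; consequently L(t) ≤ ψ^{−1}(C·t) for all t > 0. -/
open MeasureTheory Set Filter
open scoped ENNReal NNReal BigOperators

noncomputable section

/-- `ℝ^d` with the Euclidean norm. -/
abbrev Euc (d : ℕ) := EuclideanSpace ℝ (Fin d)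

/-- An axis-parallel closed cube in `ℝ^d` with positive side length. -/
structure Cube (d : ℕ) where
  corner : Euc d
  side : ℝ
  side_pos : 0 < side

variable {d : ℕ}

/-- The underlying set of a cube. -/
def Cube.carrier (Q : Cube d) : Set (Euc d) :=
  {x | ∀ i, Q.corner i ≤ x i ∧ x i ≤ Q.corner i + Q.side}

/-- The average `⟨f⟩_Q = |Q|⁻¹ ∫_Q f` of a function over a cube. -/
def cubeAvg (f : Euc d → ℝ) (Q : Cube d) : ℝ :=
  (∫ x in Q.carrier, f x) / (volume Q.carrier).toReal

/-- `w(E) = ∫_E w dx` for a weight `w`. -/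
def wMeasure (w : Euc d → ℝ) (E : Set (Euc d)) : ℝ≥0∞ :=
  ∫⁻ x in E, ENNReal.ofReal (w x)

/-- A weight: a nonnegative locally integrable function. -/
def IsWeight (w : Euc d → ℝ) : Prop :=
  (∀ x, 0 ≤ w x) ∧ LocallyIntegrable w volume

/-- A sparse collection of cubes. -/
def IsSparse (𝒮 : Set (Cube d)) : Prop :=
  ∀ Q ∈ 𝒮,
    volume (⋃ Q' ∈ {Q' ∈ 𝒮 | Q'.carrier ⊂ Q.carrier}, Q'.carrier)
      ≤ volume Q.carrier / 8

/-- The sparse operator `T f = ∑_{Q ∈ 𝒮} ⟨f⟩_Q 1_Q`. -/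
def sparseOp (𝒮 : Set (Cube d)) (f : Euc d → ℝ) (x : Euc d) : ℝ≥0∞ :=
  ∑' Q : 𝒮, (Q : Cube d).carrier.indicator
    (fun _ => ENNReal.ofReal (cubeAvg f (Q : Cube d))) x

/-- The square `(Sf)² = ∑_{Q∈𝒮} ⟨f⟩_Q² 1_Q` of the sparse square function. -/
def sparseSqSq (𝒮 : Set (Cube d)) (f : Euc d → ℝ) (x : Euc d) : ℝ≥0∞ :=
  ∑' Q : 𝒮, (Q : Cube d).carrier.indicator
    (fun _ => ENNReal.ofReal ((cubeAvg f (Q : Cube d)) ^ 2)) x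

/-- The sparse square function. -/
def sparseSq (𝒮 : Set (Cube d)) (f : Euc d → ℝ) (x : Euc d) : ℝ≥0∞ :=
  (sparseSqSq 𝒮 f x) ^ (1/2 : ℝ)

/-- The Hardy–Littlewood maximal function over cubes. -/
def maximalFn (f : Euc d → ℝ) (x : Euc d) : ℝ≥0∞ :=
  ⨆ (Q : Cube d) (_ : x ∈ Q.carrier), ENNReal.ofReal (cubeAvg (fun y => |f y|) Q)

/-- A Young function: convex, increasing, vanishing at `0`, superlinear at `∞`. -/
def IsYoung (φ : ℝ → ℝ) : Prop :=
  ConvexOn ℝ (Ici 0) φ ∧ StrictMonoOn φ (Ici 0) ∧ φ 0 = 0 ∧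
    Tendsto (fun t => φ t / t) atTop atTop

/-- The complementary Young function `ψ(s) = sup_{t>0} (st - φ(t))`. -/
def youngConj (φ : ℝ → ℝ) (s : ℝ) : ℝ :=
  sSup {y | ∃ t > 0, y = s * t - φ t}

/-- Generalized (right-continuous) inverse of an increasing function. -/
def genInv (ψ : ℝ → ℝ) (y : ℝ) : ℝ :=
  sInf {s | 0 ≤ s ∧ y ≤ ψ s}

/-- The constant `c_φ = ∑_{k≥1} 1/ψ⁻¹(2^{2^k})`, as an extended real. -/
def cPhi (ψ : ℝ → ℝ) : ℝ≥0∞ :=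
  ∑' k : ℕ, ENNReal.ofReal (1 / genInv ψ ((2:ℝ) ^ (2 ^ (k + 1))))

/-- The Luxemburg norm `‖w‖_{φ(L),Q}`. -/
def orliczNorm (φ : ℝ → ℝ) (w : Euc d → ℝ) (Q : Cube d) : ℝ :=
  sInf {lam | 0 < lam ∧
    ∫⁻ x in Q.carrier, ENNReal.ofReal (φ (w x / lam)) ≤ volume Q.carrier}

/-- The Orlicz maximal function `M_{φ(L)} w (x) = sup_{Q ∋ x} ‖w‖_{φ(L),Q}`. -/
def orliczMaximal (φ : ℝ → ℝ) (w : Euc d → ℝ) (x : Euc d) : ℝ≥0∞ :=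
  ⨆ (Q : Cube d) (_ : x ∈ Q.carrier), ENNReal.ofReal (orliczNorm φ w Q)

/-- A Dini modulus of continuity. -/
def IsDini (ω : ℝ → ℝ) : Prop :=
  (∀ t ∈ Icc (0:ℝ) 1, ω t ∈ Icc (0:ℝ) 1) ∧ AntitoneOn ω (Icc (0:ℝ) 1) ∧
    (∫⁻ t in Ioc (0:ℝ) 1, ENNReal.ofReal (ω t / t)) < ⊤

/-- A Calderón–Zygmund kernel with modulus `ω`. -/
def IsCZKernel (d : ℕ) (ω : ℝ → ℝ) (K : Euc d → Euc d → ℝ) : Prop :=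
  (∀ x y, x ≠ y → |K x y| ≤ 1 / ‖x - y‖ ^ d) ∧
  (∀ x x' y, x ≠ y → 2 * ‖x - x'‖ ≤ ‖x - y‖ →
    |K x y - K x' y| ≤ ω (‖x - x'‖ / ‖x - y‖) / ‖x - y‖ ^ d) ∧
  (∀ x y y', x ≠ y → 2 * ‖y - y'‖ ≤ ‖x - y‖ →
    |K x y - K x y'| ≤ ω (‖y - y'‖ / ‖x - y‖) / ‖x - y‖ ^ d)

/-- A Calderón–Zygmund operator: an `L²`-bounded operator of norm at most one,
represented off the diagonal by a CZ kernel with modulus `ω`. -/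
structure CZOperator (d : ℕ) (ω : ℝ → ℝ) where
  K : Euc d → Euc d → ℝ
  kernel : IsCZKernel d ω K
  T : Lp ℝ 2 (volume : Measure (Euc d)) →L[ℝ] Lp ℝ 2 (volume : Measure (Euc d))
  norm_le : ‖T‖ ≤ 1
  repr : ∀ (f g : Euc d → ℝ) (hf : MemLp f 2 (volume : Measure (Euc d))),
    Measurable f → Measurable g →
    (∃ M, ∀ x, |f x| ≤ M) → (∃ M, ∀ x, |g x| ≤ M) →
    HasCompactSupport f → HasCompactSupport g →
    Disjoint (Function.support f) (Function.support g) →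
    ∫ x, (T (hf.toLp f)) x * g x = ∫ x, (∫ y, K x y * f y) * g x

/-- The maximal truncation `T^* f`. -/
def maxTrunc (K : Euc d → Euc d → ℝ) (f : Euc d → ℝ) (x : Euc d) : ℝ≥0∞ :=
  ⨆ (δ : ℝ) (_ : 0 < δ), ENNReal.ofReal |∫ y in {y | δ < ‖x - y‖}, K x y * f y|

/-- Average of an `ℝ≥0∞`-valued function over a cube. -/
def cubeAvgE (g : Euc d → ℝ≥0∞) (Q : Cube d) : ℝ≥0∞ :=
  (∫⁻ x in Q.carrier, g x) / volume Q.carrier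

/-- The `A₁` constant `[w]_{A₁} = ess sup M w / w`. -/
def A1Const (d : ℕ) (w : Euc d → ℝ) : ℝ≥0∞ :=
  essSup (fun x => maximalFn w x / ENNReal.ofReal (w x)) volume

/-- The `A_p` constant (`[w]_{A₁}` when `p = 1`). -/
def ApConst (d : ℕ) (p : ℝ) (w : Euc d → ℝ) : ℝ≥0∞ :=
  if p = 1 then A1Const d w
  else ⨆ Q : Cube d,
    cubeAvgE (fun x => ENNReal.ofReal (w x)) Q *
      (cubeAvgE (fun x => ENNReal.ofReal (w x) ^ (-(1 / (p - 1)))) Q) ^ (p - 1)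

/-- The Fujii–Wilson `A_∞` constant. -/
def AinfConst (d : ℕ) (w : Euc d → ℝ) : ℝ≥0∞ :=
  ⨆ Q : Cube d,
    (∫⁻ x in Q.carrier, maximalFn (Q.carrier.indicator w) x) / wMeasure w Q.carrier

/-- Weak `L^p(w)` quasinorm of an `ℝ≥0∞`-valued function. -/
def weakLpNorm (w : Euc d → ℝ) (p : ℝ) (g : Euc d → ℝ≥0∞) : ℝ≥0∞ :=
  ⨆ (lam : ℝ) (_ : 0 < lam),
    ENNReal.ofReal lam * (wMeasure w {x | ENNReal.ofReal lam < g x}) ^ (1 / p)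

/-- `L^p(w)` norm of a real function. -/
def LpNormW (w : Euc d → ℝ) (p : ℝ) (f : Euc d → ℝ) : ℝ≥0∞ :=
  (∫⁻ x, ENNReal.ofReal (|f x| ^ p) * ENNReal.ofReal (w x)) ^ (1 / p)

/-- `L^p(w)` norm of an `ℝ≥0∞`-valued function. -/
def LpNormWE (w : Euc d → ℝ) (p : ℝ) (g : Euc d → ℝ≥0∞) : ℝ≥0∞ :=
  (∫⁻ x, (g x) ^ p * ENNReal.ofReal (w x)) ^ (1 / p)

/-- `log₊ x = max (log x) 0`. -/
def logp (x : ℝ) : ℝ := max (Real.log x) 0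

/-- `log₁ x = 1 + log₊ x`. -/
def log1 (x : ℝ) : ℝ := 1 + logp x

/-- `log₂ x = log₁ (log₁ x)`. -/
def log2f (x : ℝ) : ℝ := log1 (log1 x)

/-- `log₃ x = log₁ (log₂ x)`. -/
def log3f (x : ℝ) : ℝ := log1 (log2f x)

/-- `M_r w = (M (w^r))^{1/r}`. -/
def MrMaximal (r : ℝ) (w : Euc d → ℝ) (x : Euc d) : ℝ≥0∞ :=
  (maximalFn (fun y => w y ^ r) x) ^ (1 / r)

/-- The maximal cubes (w.r.t. inclusion) of a family of cubes. -/
def maximalCubes (A : Set (Cube d)) : Set (Cube d) :=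
  {Q ∈ A | ∀ Q' ∈ A, ¬ Q.carrier ⊂ Q'.carrier}

/-- What remains of `𝒮` after removing the first `v` layers. -/
def sparseResidual (𝒮 : Set (Cube d)) : ℕ → Set (Cube d)
  | 0 => 𝒮
  | v + 1 => sparseResidual 𝒮 v \ maximalCubes (sparseResidual 𝒮 v)

/-- The `v`-th sparseLayer of the collection `𝒮`. -/
def sparseLayer (𝒮 : Set (Cube d)) (v : ℕ) : Set (Cube d) := maximalCubes (sparseResidual 𝒮 v)

/-- The family `C_α` of test functions for the intrinsic square function. -/
def holderFamily (n : ℕ) (α : ℝ) : Set (Euc n → ℝ) :=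
  {γ | Function.support γ ⊆ Metric.closedBall 0 1 ∧ (∫ x, γ x) = 0 ∧
    ∀ x y, |γ x - γ y| ≤ ‖x - y‖ ^ α}

/-- `A_α f (y,t) = sup_{γ ∈ C_α} |f ∗ γ_t (y)|`. -/
def intrinsicA (n : ℕ) (α : ℝ) (f : Euc n → ℝ) (y : Euc n) (t : ℝ) : ℝ≥0∞ :=
  ⨆ γ ∈ holderFamily n α,
    ENNReal.ofReal |∫ z, f z * (t ^ (-(n:ℝ)) * γ (t⁻¹ • (y - z)))|

/-- The intrinsic square function `G_α f`. -/
def intrinsicG (n : ℕ) (α : ℝ) (f : Euc n → ℝ) (x : Euc n) : ℝ≥0∞ :=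
  (∫⁻ p in {p : Euc n × ℝ | 0 < p.2 ∧ ‖p.1 - x‖ < p.2},
      (intrinsicA n α f p.1 p.2) ^ 2 / ENNReal.ofReal (p.2 ^ (n + 1))) ^ (1/2 : ℝ)

private lemma local_key (L : ℝ → ℝ) (C : ℝ) (hC : 0 ≤ C) {K : ℝ≥0} {a b : ℝ}
    (ha : 0 < a) (hab : a ≤ b)
    (hlip : LipschitzOnWith K L (Icc a b)) (hmonoab : MonotoneOn L (Icc a b))
    (hderiv : ∀ᵐ t ∂(volume.restrict (Ioi (0:ℝ))), t * deriv L t ≤ C) :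
    L b - L a ≤ C * (Real.log b - Real.log a) := by
  rcases eq_or_lt_of_le hab with rfl | hab'
  · simp
  have hb : 0 < b := lt_trans ha hab'
  set proj : ℝ → ℝ := fun u => min (max u a) b with hproj
  have proj_mem : ∀ u, proj u ∈ Icc a b :=
    fun u => ⟨le_min (le_max_right u a) hab, min_le_right _ _⟩
  have proj_eq : ∀ u ∈ Icc a b, proj u = u := fun u hu => by
    simp only [hproj, max_eq_left hu.1, min_eq_left hu.2]
  have proj_lip : LipschitzWith 1 proj := (LipschitzWith.id.max_const a).min_const b
  have proj_mono : Monotone proj := fun u v huv =>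
    min_le_min (max_le_max huv le_rfl) le_rfl
  set M : ℝ → ℝ := fun u => L (proj u) with hM
  have Mmono : Monotone M := fun u v huv => hmonoab (proj_mem u) (proj_mem v) (proj_mono huv)
  have Mlip : LipschitzWith K M := by
    have h := hlip.comp (proj_lip.lipschitzOnWith (s := univ)) (fun u _ => proj_mem u)
    rw [mul_one, lipschitzOnWith_univ] at h
    exact h
  have Mcont : Continuous M := Mlip.continuous
  set F : StieltjesFunction ℝ := ⟨M, Mmono, fun x => Mcont.continuousAt.continuousWithinAt⟩
    with hF
  have Gmono : Monotone (fun u => (K : ℝ) * u - M u) := by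
    intro u v huv
    have h1 : |M v - M u| ≤ (K : ℝ) * |v - u| := by
      simpa [Real.dist_eq] using Mlip.dist_le_mul v u
    have h2 : |v - u| = v - u := abs_of_nonneg (sub_nonneg.2 huv)
    have h3 := le_abs_self (M v - M u)
    rw [h2] at h1
    simp only
    linarith
  have Gcont : Continuous (fun u => (K : ℝ) * u - M u) :=
    (continuous_const.mul continuous_id).sub Mcont
  set G : StieltjesFunction ℝ := ⟨fun u => (K : ℝ) * u - M u, Gmono,
    fun x => Gcont.continuousAt.continuousWithinAt⟩ with hG
  haveI : IsLocallyFiniteMeasure (F.measure + G.measure) := by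
    constructor
    intro x
    obtain ⟨s, hsmem, hs⟩ := F.measure.finiteAt_nhds x
    obtain ⟨u, humem, hu⟩ := G.measure.finiteAt_nhds x
    refine ⟨s ∩ u, inter_mem hsmem humem, ?_⟩
    have hle : (F.measure + G.measure) (s ∩ u) ≤ F.measure s + G.measure u := by
      rw [Measure.add_apply]
      exact add_le_add (measure_mono inter_subset_left) (measure_mono inter_subset_right)
    exact lt_of_le_of_lt hle (ENNReal.add_lt_top.2 ⟨hs, hu⟩)
  have hsum : F.measure + G.measure = (K : ℝ≥0∞) • (volume : Measure ℝ) := by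
    refine Measure.ext_of_Ioc _ _ (fun c d hcd => ?_)
    rw [Measure.add_apply, StieltjesFunction.measure_Ioc, StieltjesFunction.measure_Ioc]
    have h1 : 0 ≤ M d - M c := sub_nonneg.2 (Mmono hcd.le)
    have h2 : (0:ℝ) ≤ ((K:ℝ) * d - M d) - ((K:ℝ) * c - M c) := sub_nonneg.2 (Gmono hcd.le)
    have hFd : (F : ℝ → ℝ) = M := rfl
    have hGd : (G : ℝ → ℝ) = fun u => (K : ℝ) * u - M u := rfl
    rw [hFd, hGd]
    rw [← ENNReal.ofReal_add h1 h2]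
    have harg : (M d - M c) + (((K:ℝ) * d - M d) - ((K:ℝ) * c - M c)) = (K:ℝ) * (d - c) := by
      ring
    rw [harg, Measure.smul_apply, Real.volume_Ioc, smul_eq_mul,
      ENNReal.ofReal_mul K.coe_nonneg, ENNReal.ofReal_coe_nnreal]
  have hle : F.measure ≤ (K : ℝ≥0∞) • (volume : Measure ℝ) := by
    rw [← hsum]; exact Measure.le_add_right le_rfl
  have hac : F.measure ≪ (volume : Measure ℝ) := Measure.absolutelyContinuous_of_le_smul hle
  have hFv : (volume : Measure ℝ).withDensity (F.measure.rnDeriv volume) = F.measure :=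
    Measure.withDensity_rnDeriv_eq _ _ hac
  have hrestr : (volume : Measure ℝ).restrict (Ioc a b) = volume.restrict (Ioo a b) :=
    Measure.restrict_congr_set (Ioo_ae_eq_Ioc (a := a) (b := b)).symm
  -- a.e. bound on the Radon–Nikodym derivative
  have h_ae : ∀ᵐ u ∂(volume : Measure ℝ).restrict (Ioo a b),
      F.measure.rnDeriv volume u ≤ ENNReal.ofReal (C / u) := by
    have h1 : ∀ᵐ u ∂(volume : Measure ℝ).restrict (Ioo a b),
        HasDerivAt F ((F.measure.rnDeriv volume u).toReal) u :=
      ae_restrict_of_ae F.ae_hasDerivAt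
    have h2 : ∀ᵐ u ∂(volume : Measure ℝ).restrict (Ioo a b),
        F.measure.rnDeriv volume u < ⊤ :=
      ae_restrict_of_ae (Measure.rnDeriv_lt_top _ _)
    have h3 : ∀ᵐ u ∂(volume : Measure ℝ).restrict (Ioo a b), u * deriv L u ≤ C :=
      ae_restrict_of_ae_restrict_of_subset (fun x hx => lt_trans ha hx.1) hderiv
    filter_upwards [h1, h2, h3, ae_restrict_mem measurableSet_Ioo] with u hu1 hu2 hu3 hu4
    have hu0 : 0 < u := lt_trans ha hu4.1
    have heq : HasDerivAt L ((F.measure.rnDeriv volume u).toReal) u := by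
      apply hu1.congr_of_eventuallyEq
      filter_upwards [Ioo_mem_nhds hu4.1 hu4.2] with y hy
      show L y = M y
      rw [hM]
      simp only
      rw [proj_eq y (Ioo_subset_Icc_self hy)]
    have hderiv_eq : deriv L u = (F.measure.rnDeriv volume u).toReal := heq.deriv
    have hr : (F.measure.rnDeriv volume u).toReal ≤ C / u := by
      rw [← hderiv_eq, le_div_iff₀ hu0, mul_comm]
      exact hu3
    calc F.measure.rnDeriv volume u
        = ENNReal.ofReal ((F.measure.rnDeriv volume u).toReal) :=
          (ENNReal.ofReal_toReal hu2.ne).symm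
      _ ≤ ENNReal.ofReal (C / u) := ENNReal.ofReal_le_ofReal hr
  -- compute the lintegral of the bound
  have hcont : ContinuousOn (fun u : ℝ => C / u) (Icc a b) := by
    apply continuousOn_const.div continuousOn_id
    intro x hx
    exact ne_of_gt (lt_of_lt_of_le ha hx.1)
  have hInt : IntegrableOn (fun u : ℝ => C / u) (Ioc a b) :=
    (hcont.integrableOn_Icc).mono_set Ioc_subset_Icc_self
  have hnn : 0 ≤ᵐ[(volume : Measure ℝ).restrict (Ioc a b)] fun u : ℝ => C / u := by
    filter_upwards [ae_restrict_mem measurableSet_Ioc] with u hu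
    exact div_nonneg hC (le_of_lt (lt_trans ha hu.1))
  have e3 : ∫⁻ u in Ioc a b, ENNReal.ofReal (C / u)
      = ENNReal.ofReal (C * (Real.log b - Real.log a)) := by
    rw [← MeasureTheory.ofReal_integral_eq_lintegral_ofReal hInt hnn]
    congr 1
    have hIoc : ∫ u in Ioc a b, C / u = ∫ u in a..b, C / u :=
      (intervalIntegral.integral_of_le hab).symm
    rw [hIoc]
    have : ∫ u in a..b, C / u = C * ∫ u in a..b, 1 / u := by
      rw [← intervalIntegral.integral_const_mul]
      congr 1
      ext u
      ring
    rw [this, integral_one_div (Set.notMem_uIcc_of_lt ha hb),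
      Real.log_div (ne_of_gt hb) (ne_of_gt ha)]
  -- put everything together
  have e1 : ENNReal.ofReal (L b - L a) = ∫⁻ u in Ioc a b, F.measure.rnDeriv volume u := by
    have hMb : M b = L b := by rw [hM]; simp only; rw [proj_eq b ⟨hab, le_rfl⟩]
    have hMa : M a = L a := by rw [hM]; simp only; rw [proj_eq a ⟨le_rfl, hab⟩]
    have := F.measure_Ioc a b
    have hFb : (F : ℝ → ℝ) b = L b := hMb
    have hFa : (F : ℝ → ℝ) a = L a := hMa
    rw [hFb, hFa] at this
    rw [← this]
    conv_lhs => rw [← hFv]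
    rw [withDensity_apply _ measurableSet_Ioc]
  have hfinal : ENNReal.ofReal (L b - L a) ≤ ENNReal.ofReal (C * (Real.log b - Real.log a)) := by
    rw [e1, ← e3]
    rw [hrestr]
    exact lintegral_mono_ae h_ae
  have hrhs : 0 ≤ C * (Real.log b - Real.log a) :=
    mul_nonneg hC (sub_nonneg.2 (Real.log_le_log ha hab))
  exact (ENNReal.ofReal_le_ofReal_iff hrhs).1 hfinal

private lemma chain_key (L : ℝ → ℝ) (C : ℝ) (hC : 0 ≤ C)
    (hmono : MonotoneOn L (Ici 0))
    (hlip : ∀ t ∈ Ioi (0:ℝ), ∃ ε > 0, ∃ K : ℝ≥0,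
      LipschitzOnWith K L (Ioi 0 ∩ Metric.ball t ε))
    (hderiv : ∀ᵐ t ∂(volume.restrict (Ioi (0:ℝ))), t * deriv L t ≤ C) :
    ∀ s t : ℝ, 0 < s → s ≤ t → L t - L s ≤ C * (Real.log t - Real.log s) := by
  intro s t hs hst
  set A := {x ∈ Icc s t | L x - L s ≤ C * (Real.log x - Real.log s)} with hA
  have hsA : s ∈ A := ⟨⟨le_rfl, hst⟩, by simp⟩
  have hAne : A.Nonempty := ⟨s, hsA⟩
  have hAbdd : BddAbove A := ⟨t, fun x hx => hx.1.2⟩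
  set x0 := sSup A with hx0
  have hsx0 : s ≤ x0 := le_csSup hAbdd hsA
  have hx0t : x0 ≤ t := csSup_le hAne (fun x hx => hx.1.2)
  have hx0pos : 0 < x0 := lt_of_lt_of_le hs hsx0
  obtain ⟨ε, hε, K, hK⟩ := hlip x0 hx0pos
  set δ := min (ε/2) (x0/2) with hδ
  have hδpos : 0 < δ := lt_min (by linarith) (by linarith)
  have hδε : δ ≤ ε/2 := min_le_left _ _
  obtain ⟨a, haA, halt⟩ := exists_lt_of_lt_csSup hAne (show x0 - δ < x0 by linarith)
  have has : s ≤ a := haA.1.1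
  have hat : a ≤ t := haA.1.2
  have hax0 : a ≤ x0 := le_csSup hAbdd haA
  set b := min (x0 + δ) t with hb
  have hab : a ≤ b := le_min (by linarith) hat
  have hsub : Icc a b ⊆ Ioi 0 ∩ Metric.ball x0 ε := by
    intro y hy
    have h1 : 0 < y := lt_of_lt_of_le (lt_of_lt_of_le hs has) hy.1
    refine ⟨h1, ?_⟩
    rw [Metric.mem_ball, Real.dist_eq, abs_lt]
    have hyb : y ≤ b := hy.2
    have hbx : b ≤ x0 + δ := min_le_left _ _
    have hya : a ≤ y := hy.1
    constructor <;> linarith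
  have hlipab : LipschitzOnWith K L (Icc a b) := hK.mono hsub
  have hmonoab : MonotoneOn L (Icc a b) :=
    hmono.mono (fun y hy => Set.mem_Ici.2 (le_of_lt (hsub hy).1))
  have hkey := local_key L C hC (lt_of_lt_of_le hs has) hab hlipab hmonoab hderiv
  have hbA : b ∈ A := by
    refine ⟨⟨le_trans has hab, min_le_right _ _⟩, ?_⟩
    have h2 := haA.2
    have h3 : C * (Real.log b - Real.log s)
        = C * (Real.log b - Real.log a) + C * (Real.log a - Real.log s) := by ring
    linarith
  have hbx0 : b ≤ x0 := le_csSup hAbdd hbA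
  by_cases hcase : x0 + δ ≤ t
  · exfalso
    have hbe : b = x0 + δ := min_eq_left hcase
    linarith
  · have hbt : b = t := min_eq_right (by linarith)
    rw [← hbt]
    exact hbA.2

/-- If `φ(t) = t L(t)` with `t L'(t) ≤ C` a.e., then `ψ(L(t)) ≤ C t`,
hence `L(t) ≤ ψ⁻¹(C t)`. -/
theorem conj_of_slowly_varying (L : ℝ → ℝ) (C : ℝ) (hC : 1 ≤ C)
    (hL0 : ∀ t, 0 ≤ t → 0 ≤ L t) (hmono : MonotoneOn L (Ici 0))
    (hlip : ∀ t ∈ Ioi (0:ℝ), ∃ ε > 0, ∃ K : ℝ≥0,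
      LipschitzOnWith K L (Ioi 0 ∩ Metric.ball t ε))
    (hderiv : ∀ᵐ t ∂(volume.restrict (Ioi (0:ℝ))), t * deriv L t ≤ C)
    (hyoung : IsYoung (fun t => t * L t))
    (ψ : ℝ → ℝ) (hψ : ψ = youngConj (fun t => t * L t)) :
    (∀ t > 0, ψ (L t) ≤ C * t) ∧ ∀ t > 0, L t ≤ genInv ψ (C * t) := by
  obtain ⟨hconv, hsmono, hφ0, htend⟩ := hyoung
  have hC0 : (0:ℝ) ≤ C := le_trans zero_le_one hC
  have hexp1 : (1:ℝ) < Real.exp 1 := by nlinarith [Real.add_one_le_exp (1:ℝ)]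
  have key' := chain_key L C hC0 hmono hlip hderiv
  -- core bound on the elements of the sup defining `ψ`
  have core : ∀ t, 0 < t → ∀ s, s ≤ L t → ∀ u, 0 < u →
      s * u - u * L u ≤ C * t / Real.exp 1 := by
    intro t ht s hsL u hu
    by_cases hut : t ≤ u
    · have hLt : L t ≤ L u := hmono ht.le (le_trans ht.le hut) hut
      have h1 : s * u - u * L u ≤ 0 := by nlinarith
      have h2 : 0 ≤ C * t / Real.exp 1 := by positivity
      linarith
    · push_neg at hut
      have h1 : L t - L u ≤ C * (Real.log t - Real.log u) := key' u t hu hut.le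
      have h2 : Real.log (t/u) ≤ (t/u) / Real.exp 1 := by
        have h3 := Real.log_le_sub_one_of_pos
          (show 0 < (t/u)/Real.exp 1 by positivity)
        rw [Real.log_div (ne_of_gt (div_pos ht hu)) (ne_of_gt (Real.exp_pos 1)),
          Real.log_exp] at h3
        linarith
      have hlogdiv : Real.log (t/u) = Real.log t - Real.log u :=
        Real.log_div (ne_of_gt ht) (ne_of_gt hu)
      have h4 : u * (Real.log t - Real.log u) ≤ t / Real.exp 1 := by
        rw [← hlogdiv]
        calc u * Real.log (t/u) ≤ u * ((t/u)/Real.exp 1) :=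
              mul_le_mul_of_nonneg_left h2 hu.le
          _ = t / Real.exp 1 := by field_simp
      have h5 : u * (L t - L u) ≤ C * (t / Real.exp 1) := by
        calc u * (L t - L u) ≤ u * (C * (Real.log t - Real.log u)) :=
              mul_le_mul_of_nonneg_left h1 hu.le
          _ = C * (u * (Real.log t - Real.log u)) := by ring
          _ ≤ C * (t / Real.exp 1) := mul_le_mul_of_nonneg_left h4 hC0
      have h6 : s * u ≤ L t * u := mul_le_mul_of_nonneg_right hsL hu.le
      have h7 : C * (t / Real.exp 1) = C * t / Real.exp 1 := by ring
      nlinarith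
  -- `ψ s ≤ C t / e` whenever `s ≤ L t`
  have hpsi_le : ∀ t, 0 < t → ∀ s, s ≤ L t → ψ s ≤ C * t / Real.exp 1 := by
    intro t ht s hs
    rw [hψ]
    apply Real.sSup_le
    · rintro y ⟨u, hu, rfl⟩
      exact core t ht s hs u hu
    · positivity
  constructor
  · intro t ht
    have h1 := hpsi_le t ht (L t) le_rfl
    have h2 : C * t / Real.exp 1 ≤ C * t :=
      div_le_self (by positivity) hexp1.le
    linarith
  · intro t ht
    show L t ≤ sInf {s | 0 ≤ s ∧ C * t ≤ ψ s}
    apply le_csInf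
    · -- nonemptiness
      have hL1 : 0 ≤ L 1 := hL0 1 zero_le_one
      set s0 := C * t + L 1 + 1 with hs0def
      have hs0 : 0 ≤ s0 := by positivity
      obtain ⟨U, hU⟩ := Filter.eventually_atTop.1 (htend.eventually_ge_atTop s0)
      set U' := max U 1 with hU'
      have hU'1 : (1:ℝ) ≤ U' := le_max_right _ _
      have hbdd : BddAbove {y | ∃ u > 0, y = s0 * u - u * L u} := by
        refine ⟨s0 * U', ?_⟩
        rintro y ⟨u, hu, rfl⟩
        by_cases huU : u ≤ U'
        · have h1 : 0 ≤ u * L u := mul_nonneg hu.le (hL0 u hu.le)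
          have h2 : s0 * u ≤ s0 * U' := mul_le_mul_of_nonneg_left huU hs0
          linarith
        · push_neg at huU
          have hUu : U ≤ u := le_trans (le_max_left _ _) huU.le
          have h1 : s0 ≤ u * L u / u := hU u hUu
          have h2 : u * L u / u = L u := by field_simp
          rw [h2] at h1
          have h3 : s0 * u - u * L u ≤ 0 := by nlinarith
          have h4 : 0 ≤ s0 * U' := mul_nonneg hs0 (by linarith)
          linarith
      have hmem : s0 * 1 - 1 * L 1 ∈ {y | ∃ u > 0, y = s0 * u - u * L u} :=
        ⟨1, one_pos, rfl⟩
      have hψs0 : s0 * 1 - 1 * L 1 ≤ ψ s0 := by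
        rw [hψ]
        exact le_csSup hbdd hmem
      refine ⟨s0, hs0, ?_⟩
      have : s0 * 1 - 1 * L 1 = C * t + 1 := by rw [hs0def]; ring
      linarith
    · rintro s ⟨hs0, hsCt⟩
      by_contra hcon
      push_neg at hcon
      have h1 := hpsi_le t ht s hcon.le
      have hCt : 0 < C * t := mul_pos (lt_of_lt_of_le one_pos hC) ht
      have h2 : C * t / Real.exp 1 < C * t := div_lt_self hCt hexp1
      linarith

end
end

section
/- Let 1 < r < ∞, r′ = r/(r−1), let φ(t) = t^r, and let ψ be the complementary Young function of φ. Then there is an absolute constant C such that Σ_{k=1}^∞ 1/ψ^{−1}(2^{2^k}) ≤ C·(1 + log r′). -/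
open MeasureTheory Set Filter
open scoped ENNReal NNReal BigOperators

noncomputable section

variable {d : ℕ}

section AuxLemmas

open Real

/-- Upper bound on the complementary function of `t ↦ t^r`. -/
lemma youngConj_rpow_le {r : ℝ} (hr : 1 < r) {s : ℝ} (hs : 0 ≤ s) :
    youngConj (fun t => t ^ r) s ≤ s ^ (r / (r - 1)) := by
  have hpq : (r / (r - 1)).HolderConjugate r :=
    (Real.HolderConjugate.conjExponent hr).symm
  apply Real.sSup_le
  · rintro y ⟨t, ht, rfl⟩
    have hyoung := Real.young_inequality_of_nonneg hs ht.le hpq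
    have h1 : s ^ (r / (r - 1)) / (r / (r - 1)) ≤ s ^ (r / (r - 1)) := by
      apply div_le_self (Real.rpow_nonneg hs _)
      exact le_of_lt ((one_lt_div (by linarith)).mpr (by linarith))
    have h2 : t ^ r / r ≤ t ^ r := div_le_self (Real.rpow_nonneg ht.le _) hr.le
    nlinarith
  · exact Real.rpow_nonneg hs _

/-- Per-term bound: `1/ψ⁻¹(y) ≤ y^{-1/r'}`. -/
lemma genInv_term_le {r : ℝ} (hr : 1 < r) {y : ℝ} (hy : 1 ≤ y) :
    ENNReal.ofReal (1 / genInv (youngConj (fun t => t ^ r)) y)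
      ≤ ENNReal.ofReal (y ^ (-((r - 1) / r))) := by
  set ψ := youngConj (fun t => t ^ r) with hψ
  set S : Set ℝ := {s | 0 ≤ s ∧ y ≤ ψ s} with hSdef
  have hy0 : (0:ℝ) < y := lt_of_lt_of_le one_pos hy
  have ha0 : (0:ℝ) < (r - 1) / r := div_pos (by linarith) (by linarith)
  by_cases hS : S.Nonempty
  · have hlb : ∀ s ∈ S, y ^ ((r - 1) / r) ≤ s := by
      rintro s ⟨hs0, hsy⟩
      have h1 : y ≤ s ^ (r / (r - 1)) := hsy.trans (youngConj_rpow_le hr hs0)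
      have h2 : y ^ ((r - 1) / r) ≤ (s ^ (r / (r - 1))) ^ ((r - 1) / r) :=
        Real.rpow_le_rpow hy0.le h1 ha0.le
      rwa [← Real.rpow_mul hs0,
        show r / (r - 1) * ((r - 1) / r) = 1 by
          rw [div_mul_div_comm, mul_comm r (r - 1)]
          exact div_self (mul_ne_zero (by linarith) (by linarith)), Real.rpow_one] at h2
    have hginv : y ^ ((r - 1) / r) ≤ genInv ψ y := le_csInf hS hlb
    have hypos : (0:ℝ) < y ^ ((r - 1) / r) := Real.rpow_pos_of_pos hy0 _
    have : 1 / genInv ψ y ≤ 1 / y ^ ((r - 1) / r) :=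
      one_div_le_one_div_of_le hypos hginv
    refine ENNReal.ofReal_le_ofReal (this.trans_eq ?_)
    rw [Real.rpow_neg hy0.le, one_div]
  · have : genInv ψ y = 0 := by
      rw [genInv]
      have : {s | 0 ≤ s ∧ y ≤ ψ s} = (∅ : Set ℝ) :=
        Set.not_nonempty_iff_eq_empty.mp hS
      rw [this, Real.sInf_empty]
    simp [this]

end AuxLemmas

/-- For `φ(t) = t^r`, the constant `c_φ` is at most a multiple of `1 + log r'`. -/
theorem cPhi_power :
    ∃ C : ℝ, 0 < C ∧
      ∀ r : ℝ, 1 < r →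
      ∀ ψ : ℝ → ℝ, ψ = youngConj (fun t => t ^ r) →
        cPhi ψ ≤ ENNReal.ofReal (C * (1 + Real.log (r / (r - 1)))) := by
  refine ⟨3, by norm_num, fun r hr ψ hψ => ?_⟩
  subst hψ
  set p' : ℝ := r / (r - 1) with hp'def
  have hr0 : (0:ℝ) < r - 1 := by linarith
  have hp'1 : (1:ℝ) < p' := (one_lt_div hr0).mpr (by linarith)
  have hp'0 : (0:ℝ) < p' := lt_trans one_pos hp'1
  have hlogp' : (0:ℝ) ≤ Real.log p' := Real.log_nonneg hp'1.le
  set a : ℝ := (r - 1) / r with hadef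
  have ha0 : (0:ℝ) < a := by positivity
  have hap' : a = p'⁻¹ := by rw [hadef, hp'def, inv_div]
  set K : ℕ := ⌈Real.logb 2 p'⌉₊ with hKdef
  have hlogb0 : (0:ℝ) ≤ Real.logb 2 p' :=
    Real.logb_nonneg (by norm_num) hp'1.le
  have hK1 : p' ≤ (2:ℝ) ^ K := by
    have h1 : p' = (2:ℝ) ^ (Real.logb 2 p') := (Real.rpow_logb (by norm_num) (by norm_num) hp'0).symm
    have h2 : (2:ℝ) ^ (Real.logb 2 p') ≤ (2:ℝ) ^ ((K:ℝ)) :=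
      Real.rpow_le_rpow_of_exponent_le one_le_two (Nat.le_ceil _)
    rw [Real.rpow_natCast] at h2
    linarith [h1 ▸ h2]
  have hK2 : (K:ℝ) ≤ Real.logb 2 p' + 1 := (Nat.ceil_lt_add_one hlogb0).le
  -- the pointwise bound on each term
  have hterm : ∀ k : ℕ,
      ENNReal.ofReal (1 / genInv (youngConj fun t => t ^ r) ((2:ℝ) ^ (2 ^ (k + 1))))
        ≤ ENNReal.ofReal ((2:ℝ) ^ (-(((2 ^ (k + 1) : ℕ) : ℝ) * a))) := by
    intro k
    have hy1 : (1:ℝ) ≤ (2:ℝ) ^ (2 ^ (k + 1)) := one_le_pow₀ one_le_two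
    refine (genInv_term_le hr hy1).trans_eq ?_
    congr 1
    rw [← Real.rpow_natCast (2:ℝ) (2 ^ (k + 1)), ← Real.rpow_mul (by norm_num),
      mul_neg]
  set g : ℕ → ℝ≥0∞ := fun k => ENNReal.ofReal ((2:ℝ) ^ (-(((2 ^ (k + 1) : ℕ) : ℝ) * a)))
    with hgdef
  have hsum1 : cPhi (youngConj fun t => t ^ r) ≤ ∑' k, g k :=
    ENNReal.tsum_le_tsum hterm
  have hsplit : ∑' k, g k = (∑ i ∈ Finset.range K, g i) + ∑' j, g (j + K) :=
    (Summable.sum_add_tsum_nat_add' (f := g) (k := K) ENNReal.summable).symm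
  have hg_le_one : ∀ k, g k ≤ 1 := by
    intro k
    have h1 : (2:ℝ) ^ (-(((2 ^ (k + 1) : ℕ) : ℝ) * a)) ≤ 1 :=
      Real.rpow_le_one_of_one_le_of_nonpos one_le_two
        (neg_nonpos.mpr (mul_nonneg (by positivity) ha0.le))
    calc g k ≤ ENNReal.ofReal 1 := ENNReal.ofReal_le_ofReal h1
      _ = 1 := by simp
  have hhead : (∑ i ∈ Finset.range K, g i) ≤ (K : ℝ≥0∞) := by
    calc (∑ i ∈ Finset.range K, g i) ≤ ∑ _i ∈ Finset.range K, (1:ℝ≥0∞) :=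
          Finset.sum_le_sum fun i _ => hg_le_one i
      _ = (K : ℝ≥0∞) := by simp
  have htail : ∑' j, g (j + K) ≤ 2 := by
    have hbnd : ∀ j : ℕ, g (j + K) ≤ ENNReal.ofReal ((1/2 : ℝ) ^ j) := by
      intro j
      apply ENNReal.ofReal_le_ofReal
      have he1 : ((j : ℝ)) ≤ ((2 ^ (j + K + 1) : ℕ) : ℝ) * a := by
        have h2K : (1:ℝ) ≤ (2:ℝ) ^ K * a := by
          rw [hap']
          nlinarith [mul_inv_cancel₀ hp'0.ne', inv_pos.mpr hp'0, hK1]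
        have hjj : ((j:ℝ)) ≤ (2:ℝ) ^ (j + 1) := by
          have := Nat.lt_two_pow_self (n := j + 1)
          have h' : ((j:ℝ)) + 1 < ((2 ^ (j+1) : ℕ) : ℝ) := by exact_mod_cast this
          push_cast at h' ⊢
          linarith
        have : ((2 ^ (j + K + 1) : ℕ) : ℝ) * a = (2:ℝ) ^ (j + 1) * ((2:ℝ) ^ K * a) := by
          push_cast
          ring
        rw [this]
        calc ((j:ℝ)) ≤ (2:ℝ) ^ (j+1) := hjj
          _ = (2:ℝ) ^ (j+1) * 1 := by ring
          _ ≤ (2:ℝ) ^ (j+1) * ((2:ℝ)^K * a) := by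
              exact mul_le_mul_of_nonneg_left h2K (by positivity)
      calc (2:ℝ) ^ (-(((2 ^ (j + K + 1) : ℕ) : ℝ) * a)) ≤ (2:ℝ) ^ (-((j:ℝ))) :=
            Real.rpow_le_rpow_of_exponent_le one_le_two (by linarith)
        _ = (1/2 : ℝ) ^ j := by
            rw [Real.rpow_neg (by norm_num : (0:ℝ) ≤ 2), Real.rpow_natCast, ← inv_pow,
              one_div]
    calc (∑' j, g (j + K)) ≤ ∑' j : ℕ, ENNReal.ofReal ((1/2 : ℝ) ^ j) :=
          ENNReal.tsum_le_tsum hbnd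
      _ = ENNReal.ofReal (∑' j : ℕ, (1/2 : ℝ) ^ j) :=
          (ENNReal.ofReal_tsum_of_nonneg (fun j => by positivity)
            (summable_geometric_of_lt_one (by norm_num) (by norm_num))).symm
      _ = 2 := by rw [tsum_geometric_two]; norm_num
  have htotal : cPhi (youngConj fun t => t ^ r) ≤ (K : ℝ≥0∞) + 2 := by
    calc cPhi (youngConj fun t => t ^ r) ≤ ∑' k, g k := hsum1
      _ = (∑ i ∈ Finset.range K, g i) + ∑' j, g (j + K) := hsplit
      _ ≤ (K : ℝ≥0∞) + 2 := add_le_add hhead htail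
  refine htotal.trans ?_
  have hcast : (K : ℝ≥0∞) + 2 = ENNReal.ofReal ((K : ℝ) + 2) := by
    rw [ENNReal.ofReal_add (by positivity) (by norm_num)]
    norm_num
  rw [hcast]
  apply ENNReal.ofReal_le_ofReal
  have hlog2 : (0.6931471803 : ℝ) < Real.log 2 := Real.log_two_gt_d9
  have hlogb : Real.logb 2 p' = Real.log p' / Real.log 2 := rfl
  rw [hlogb] at hK2
  have h2 : Real.log p' / Real.log 2 ≤ 2 * Real.log p' := by
    rw [div_le_iff₀ (by linarith)]
    nlinarith
  nlinarith

end
end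

section
/- Let 1 < α < 2, let φ(t) = t·(log₂ t)^α (where log₂ t = 1+log₊(1+log₊ t)), and let ψ be the complementary Young function of φ. Then there is an absolute constant C such that Σ_{k=1}^∞ 1/ψ^{−1}(2^{2^k}) ≤ C/(α−1). -/
open MeasureTheory Set Filter
open scoped ENNReal NNReal BigOperators

noncomputable section

variable {d : ℕ}

-- ### auxiliary lemmas for `cPhi_loglog`

lemma one_le_log1 (y : ℝ) : 1 ≤ log1 y := by
  have := le_max_right (Real.log y) (0:ℝ)
  simp only [log1, logp]; linarith

lemma log_le_log1 (y : ℝ) : Real.log y ≤ log1 y := by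
  have := le_max_left (Real.log y) (0:ℝ)
  simp only [log1, logp]; linarith

lemma one_le_log2f (x : ℝ) : 1 ≤ log2f x := one_le_log1 _

lemma young_elem_le {α s t : ℝ} (hα1 : 1 < α) (hα2 : α < 2) (hs : 0 ≤ s) (ht : 0 < t) :
    s * t - t * (log2f t) ^ α ≤ s * Real.exp (Real.exp (s ^ (1/α))) := by
  have hu : 0 ≤ s ^ (1/α) := Real.rpow_nonneg hs _
  set u := s ^ (1/α) with hu_def
  have hse : 0 ≤ s * Real.exp (Real.exp u) := by positivity
  rcases le_or_gt t (Real.exp (Real.exp u)) with hcase | hcase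
  · have h1 : 0 ≤ t * (log2f t) ^ α :=
      mul_nonneg ht.le (Real.rpow_nonneg (by linarith [one_le_log2f t]) _)
    have h2 : s * t ≤ s * Real.exp (Real.exp u) := mul_le_mul_of_nonneg_left hcase hs
    linarith
  · have hlog : Real.exp u < Real.log t := (Real.lt_log_iff_exp_lt ht).2 hcase
    have h2 : Real.exp u ≤ log1 t := hlog.le.trans (log_le_log1 t)
    have hl1pos : 0 < log1 t := lt_of_lt_of_le (Real.exp_pos u) h2
    have h3 : u ≤ log2f t := by
      have hu2 : u ≤ Real.log (log1 t) := by
        calc u = Real.log (Real.exp u) := (Real.log_exp u).symm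
        _ ≤ Real.log (log1 t) := Real.log_le_log (Real.exp_pos u) h2
      calc u ≤ Real.log (log1 t) := hu2
      _ ≤ log1 (log1 t) := log_le_log1 _
    have h4 : s ≤ (log2f t) ^ α := by
      have h5 : u ^ α ≤ (log2f t) ^ α := Real.rpow_le_rpow hu h3 (by linarith)
      have h6 : u ^ α = s := by
        rw [hu_def, ← Real.rpow_mul hs, one_div, inv_mul_cancel₀ (by linarith : α ≠ 0),
          Real.rpow_one]
      linarith
    have h7 : t * s ≤ t * (log2f t) ^ α := mul_le_mul_of_nonneg_left h4 ht.le
    have h8 : s * t = t * s := mul_comm s t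
    linarith

lemma youngConj_le {α s : ℝ} (hα1 : 1 < α) (hα2 : α < 2) (hs : 0 ≤ s) :
    youngConj (fun t => t * (log2f t) ^ α) s ≤ s * Real.exp (Real.exp (s ^ (1/α))) := by
  apply Real.sSup_le
  · rintro y ⟨t, ht, rfl⟩
    exact young_elem_le hα1 hα2 hs ht
  · positivity

lemma youngConj_ge {α s : ℝ} (hα1 : 1 < α) (hα2 : α < 2) (hs : 0 ≤ s) :
    s - 1 ≤ youngConj (fun t => t * (log2f t) ^ α) s := by
  apply le_csSup
  · exact ⟨s * Real.exp (Real.exp (s ^ (1/α))), by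
      rintro y ⟨t, ht, rfl⟩
      exact young_elem_le hα1 hα2 hs ht⟩
  · refine ⟨1, one_pos, ?_⟩
    simp [log2f, log1, logp, Real.log_one, Real.one_rpow]

lemma genInv_ge {ψ : ℝ → ℝ} {Y B : ℝ}
    (hne : ∃ s, 0 ≤ s ∧ Y ≤ ψ s)
    (h : ∀ s, 0 ≤ s → s < B → ψ s < Y) : B ≤ genInv ψ Y := by
  apply le_csInf
  · obtain ⟨s, hs1, hs2⟩ := hne; exact ⟨s, hs1, hs2⟩
  · rintro b ⟨hb0, hbY⟩
    by_contra hlt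
    push_neg at hlt
    exact absurd hbY (not_le.mpr (h b hb0 hlt))


lemma pointwise_tele {α : ℝ} (hα1 : 1 < α) (hα2 : α < 2) (i : ℕ) :
    1 / ((i:ℝ)+2) ^ α ≤ (((i:ℝ)+1) ^ (1-α) - ((i:ℝ)+2) ^ (1-α)) / (α-1) := by
  set a : ℝ := (i:ℝ)+1 with ha_def
  have ha : (1:ℝ) ≤ a := by
    have : (0:ℝ) ≤ (i:ℝ) := Nat.cast_nonneg i
    rw [ha_def]; linarith
  have ha0 : (0:ℝ) < a := by linarith
  have hb0 : (0:ℝ) < a + 1 := by linarith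
  have hA : (0:ℝ) < a ^ α := Real.rpow_pos_of_pos ha0 _
  have hB : (0:ℝ) < (a+1) ^ α := Real.rpow_pos_of_pos hb0 _
  have hab : ((i:ℝ)+2) = a + 1 := by rw [ha_def]; ring
  rw [hab]
  have bern : 1 + α * (1/a) ≤ (1 + 1/a) ^ α :=
    one_add_mul_self_le_rpow_one_add (le_trans (by norm_num : (-1:ℝ) ≤ 0) (by positivity)) hα1.le
  have hfrac : (1 + 1/a) = (a+1)/a := by field_simp
  have key : (a + α) * a ^ α ≤ a * (a+1) ^ α := by
    have h1 : (a + α)/a ≤ (a+1) ^ α / a ^ α := by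
      rw [← Real.div_rpow hb0.le ha0.le, ← hfrac]
      calc (a + α)/a = 1 + α * (1/a) := by field_simp; try ring
      _ ≤ (1 + 1/a) ^ α := bern
    rw [div_le_div_iff₀ ha0 hA] at h1
    linarith
  have e1 : a ^ (1-α) = a / a ^ α := by
    rw [Real.rpow_sub ha0, Real.rpow_one]
  have e2 : (a+1) ^ (1-α) = (a+1) / (a+1) ^ α := by
    rw [Real.rpow_sub hb0, Real.rpow_one]
  rw [e1, e2, le_div_iff₀ (by linarith : (0:ℝ) < α - 1)]
  rw [div_sub_div _ _ hA.ne' hB.ne', div_mul_eq_mul_div, div_le_div_iff₀ hB (mul_pos hA hB)]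
  nlinarith [mul_le_mul_of_nonneg_right key hB.le, mul_pos hA hB]

lemma sum_rpow_le {α : ℝ} (hα1 : 1 < α) (hα2 : α < 2) (m : ℕ) :
    ∑ k ∈ Finset.range m, 1 / ((k:ℝ)+1) ^ α ≤ 1 + 1/(α-1) := by
  have hα1' : (0:ℝ) < α - 1 := by linarith
  cases m with
  | zero =>
    simp only [Finset.range_zero, Finset.sum_empty]
    positivity
  | succ n =>
    rw [Finset.sum_range_succ']
    have hmain : ∑ i ∈ Finset.range n, 1 / (((i+1:ℕ):ℝ)+1) ^ α ≤ 1/(α-1) := by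
      set h : ℕ → ℝ := fun j => ((j:ℝ)+1) ^ (1-α) with hh
      calc ∑ i ∈ Finset.range n, 1 / (((i+1:ℕ):ℝ)+1) ^ α
          ≤ ∑ i ∈ Finset.range n, (h i - h (i+1)) / (α-1) := by
            apply Finset.sum_le_sum
            intro i _
            have := pointwise_tele hα1 hα2 i
            have hc1 : (((i+1:ℕ):ℝ)+1) = (i:ℝ)+2 := by push_cast; ring
            have hc2 : h i = ((i:ℝ)+1) ^ (1-α) := rfl
            have hc3 : h (i+1) = ((i:ℝ)+2) ^ (1-α) := by
              simp only [hh]; push_cast; try ring_nf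
            rw [hc1, hc2, hc3]
            exact this
      _ = (∑ i ∈ Finset.range n, (h i - h (i+1))) / (α-1) := by rw [Finset.sum_div]
      _ = (h 0 - h n) / (α-1) := by rw [Finset.sum_range_sub' h n]
      _ ≤ 1/(α-1) := by
          have hh0 : h 0 = 1 := by simp only [hh]; norm_num [Real.one_rpow]
          have hhn : 0 ≤ h n := Real.rpow_nonneg (by positivity) _
          rw [hh0]
          gcongr
          linarith
    have h0 : (1:ℝ) / (((0:ℕ):ℝ)+1) ^ α = 1 := by norm_num [Real.one_rpow]
    rw [h0]
    linarith [hmain]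


lemma arith_big {α : ℝ} (hα1 : 1 < α) (hα2 : α < 2) (j : ℕ) :
    (Real.log 2 / 2 * ((j:ℝ)+4)) ^ α * Real.exp (Real.exp (Real.log 2 / 2 * ((j:ℝ)+4)))
      ≤ (2:ℝ) ^ (2 ^ (j+4)) := by
  have hL1 : (0.6931471803:ℝ) < Real.log 2 := Real.log_two_gt_d9
  have hL2 : Real.log 2 < 0.6931471808 := Real.log_two_lt_d9
  set L := Real.log 2 with hL_def
  have hL0 : (0:ℝ) < L := by linarith
  have hj0 : (0:ℝ) ≤ (j:ℝ) := Nat.cast_nonneg j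
  set x := L/2*((j:ℝ)+4) with hx_def
  have hx0 : (0:ℝ) < x := by positivity
  -- x^α ≤ exp (x*α)
  have h1 : x ^ α ≤ Real.exp (x*α) := by
    have hxe : x ≤ Real.exp x := by linarith [Real.add_one_le_exp x]
    calc x ^ α ≤ (Real.exp x) ^ α := Real.rpow_le_rpow hx0.le hxe (by linarith)
    _ = Real.exp (x*α) := (Real.exp_mul x α).symm
  -- x*α ≤ (j+4)*L
  have h2 : x*α ≤ ((j:ℝ)+4)*L := by rw [hx_def]; nlinarith
  -- exp x ≤ 2^(j+2)
  have hpow2 : ∀ m : ℕ, Real.exp ((m:ℝ)*L) = (2:ℝ) ^ m := by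
    intro m
    rw [hL_def, Real.exp_nat_mul, Real.exp_log (by norm_num : (0:ℝ) < 2)]
  have h3 : Real.exp x ≤ (2:ℝ) ^ (j+2) := by
    have hx2 : x ≤ ((j:ℝ)+2)*L := by rw [hx_def]; nlinarith
    calc Real.exp x ≤ Real.exp (((j:ℝ)+2)*L) := Real.exp_le_exp.2 hx2
    _ = Real.exp (((j+2:ℕ):ℝ)*L) := by push_cast; ring_nf
    _ = (2:ℝ) ^ (j+2) := hpow2 (j+2)
  have h4 : x ^ α * Real.exp (Real.exp x)
      ≤ Real.exp (((j:ℝ)+4)*L) * Real.exp ((2:ℝ) ^ (j+2)) := by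
    apply mul_le_mul (h1.trans (Real.exp_le_exp.2 h2)) (Real.exp_le_exp.2 h3)
      (Real.exp_pos _).le (Real.exp_pos _).le
  rw [← Real.exp_add] at h4
  -- final exponent comparison
  have hcast : ((2:ℝ) ^ (2 ^ (j+4)) : ℝ) = Real.exp (((2 ^ (j+4) : ℕ):ℝ)*L) := (hpow2 _).symm
  rw [hcast]
  apply h4.trans
  apply Real.exp_le_exp.2
  have hj4 : ((j:ℝ)+4) ≤ (2:ℝ) ^ (j+2) := by
    have h5 : j + 4 ≤ 2 ^ (j+2) := by
      have : j < 2 ^ j := Nat.lt_two_pow_self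
      calc j + 4 ≤ 4*(j+1) := by omega
      _ = 2 ^ 2 * (j+1) := by norm_num
      _ ≤ 2 ^ 2 * 2 ^ j := by
          apply Nat.mul_le_mul_left
          omega
      _ = 2 ^ (j+2) := by rw [← pow_add]; ring_nf
    calc ((j:ℝ)+4) = ((j+4:ℕ):ℝ) := by push_cast; ring
    _ ≤ ((2^(j+2):ℕ):ℝ) := Nat.cast_le.2 h5
    _ = (2:ℝ) ^ (j+2) := by push_cast; ring
  have hp2 : (0:ℝ) < (2:ℝ) ^ (j+2) := by positivity
  have hsplit : ((2 ^ (j+4) : ℕ):ℝ) = 4 * (2:ℝ) ^ (j+2) := by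
    push_cast
    rw [pow_add, pow_add]
    ring
  rw [hsplit]
  nlinarith [mul_le_mul_of_nonneg_right hj4 hL0.le]

lemma term_le {α : ℝ} (hα1 : 1 < α) (hα2 : α < 2) (k : ℕ) :
    1 / genInv (youngConj (fun t => t * (log2f t) ^ α)) ((2:ℝ) ^ (2 ^ (k+1)))
      ≤ 36 / ((k:ℝ)+1) ^ α := by
  set ψ := youngConj (fun t => t * (log2f t) ^ α) with hψ
  set Y : ℝ := (2:ℝ) ^ (2 ^ (k+1)) with hY
  have hY4 : (4:ℝ) ≤ Y := by
    rw [hY]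
    calc (4:ℝ) = 2^2 := by norm_num
    _ ≤ 2 ^ (2^(k+1)) := by
        apply pow_le_pow_right₀ (by norm_num : (1:ℝ) ≤ 2)
        calc 2 = 2^1 := rfl
        _ ≤ 2^(k+1) := Nat.pow_le_pow_right (by norm_num) (by omega)
  have hne : ∃ s, 0 ≤ s ∧ Y ≤ ψ s := by
    refine ⟨Y+1, by linarith, ?_⟩
    have := youngConj_ge (s := Y+1) hα1 hα2 (by linarith)
    rw [hψ]; linarith
  have hk0 : (0:ℝ) ≤ (k:ℝ) := Nat.cast_nonneg k
  have hkpos : (0:ℝ) < (k:ℝ)+1 := by positivity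
  have hnα : (0:ℝ) < ((k:ℝ)+1) ^ α := Real.rpow_pos_of_pos hkpos _
  rcases le_or_gt k 2 with hk | hk
  · -- small case k ≤ 2
    have hgen : (1/4:ℝ) ≤ genInv ψ Y := by
      apply genInv_ge hne
      intro s hs0 hs
      have h1 : ψ s ≤ s * Real.exp (Real.exp (s ^ (1/α))) := youngConj_le hα1 hα2 hs0
      have h2 : s ^ (1/α) ≤ 1 := Real.rpow_le_one hs0 (by linarith) (by positivity)
      have h3 : Real.exp (Real.exp (s ^ (1/α))) ≤ Real.exp (Real.exp 1) :=
        Real.exp_le_exp.2 (Real.exp_le_exp.2 h2)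
      have h4 : Real.exp (Real.exp 1) < 16 := by
        have e1 : Real.exp 1 < 2.7182818286 := Real.exp_one_lt_d9
        have e2 : Real.exp (Real.exp 1) < Real.exp 2.7182818286 := Real.exp_lt_exp.2 e1
        have e3 : Real.exp (2.7182818286:ℝ) < Real.exp (4 * Real.log 2) := by
          apply Real.exp_lt_exp.2
          have := Real.log_two_gt_d9
          linarith
        have e4 : Real.exp (4 * Real.log 2) = 16 := by
          rw [show (4:ℝ) * Real.log 2 = ((4:ℕ):ℝ) * Real.log 2 by norm_num,
            Real.exp_nat_mul, Real.exp_log (by norm_num : (0:ℝ) < 2)]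
          norm_num
        linarith
      have h5 : s * Real.exp (Real.exp (s ^ (1/α))) ≤ s * Real.exp (Real.exp 1) :=
        mul_le_mul_of_nonneg_left h3 hs0
      have h6 : s * Real.exp (Real.exp 1) < 4 := by
        nlinarith [Real.exp_pos (Real.exp 1)]
      linarith
    have h7 : 1 / genInv ψ Y ≤ 4 := by
      have h := one_div_le_one_div_of_le (by norm_num : (0:ℝ) < 1/4) hgen
      norm_num at h
      rw [one_div]
      exact h
    have h8 : ((k:ℝ)+1) ^ α ≤ 9 := by
      have ha : ((k:ℝ)+1) ^ α ≤ ((k:ℝ)+1) ^ (2:ℝ) :=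
        Real.rpow_le_rpow_of_exponent_le (by linarith) hα2.le
      have hk3 : ((k:ℝ)+1) ≤ 3 := by
        have : (k:ℝ) ≤ 2 := by exact_mod_cast hk
        linarith
      have hb : ((k:ℝ)+1) ^ (2:ℝ) = ((k:ℝ)+1) * ((k:ℝ)+1) := by
        rw [show (2:ℝ) = ((2:ℕ):ℝ) by norm_num, Real.rpow_natCast]; ring
      rw [hb] at ha
      nlinarith
    rw [le_div_iff₀ hnα]
    nlinarith
  · -- big case k ≥ 3
    obtain ⟨j, rfl⟩ : ∃ j, k = j + 3 := ⟨k - 3, by omega⟩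
    have hL1 : (0.6931471803:ℝ) < Real.log 2 := Real.log_two_gt_d9
    have hL2 : Real.log 2 < 0.6931471808 := Real.log_two_lt_d9
    set c : ℝ := Real.log 2 / 2 with hc
    have hc0 : (0:ℝ) < c := by rw [hc]; linarith
    have hj0 : (0:ℝ) ≤ (j:ℝ) := Nat.cast_nonneg j
    have hn4 : ((j+3:ℕ):ℝ) + 1 = (j:ℝ)+4 := by push_cast; ring
    have hcn : (0:ℝ) < c * ((j:ℝ)+4) := by positivity
    set B : ℝ := (c * ((j:ℝ)+4)) ^ α with hB
    have hB0 : (0:ℝ) < B := Real.rpow_pos_of_pos hcn _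
    have hgen : B ≤ genInv ψ Y := by
      apply genInv_ge hne
      intro s hs0 hsB
      have h1 : ψ s ≤ s * Real.exp (Real.exp (s ^ (1/α))) := youngConj_le hα1 hα2 hs0
      have h2 : s ^ (1/α) ≤ c * ((j:ℝ)+4) := by
        have ha : s ^ (1/α) ≤ B ^ (1/α) := Real.rpow_le_rpow hs0 hsB.le (by positivity)
        have hBp : B ^ (1/α) = c * ((j:ℝ)+4) := by
          rw [hB, ← Real.rpow_mul hcn.le, mul_one_div_cancel (by linarith : α ≠ 0),
            Real.rpow_one]
        linarith
      have h3 : s * Real.exp (Real.exp (s ^ (1/α))) < B * Real.exp (Real.exp (c*((j:ℝ)+4))) := by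
        have e := Real.exp_le_exp.2 (Real.exp_le_exp.2 h2)
        calc s * Real.exp (Real.exp (s ^ (1/α)))
            ≤ s * Real.exp (Real.exp (c*((j:ℝ)+4))) := mul_le_mul_of_nonneg_left e hs0
        _ < B * Real.exp (Real.exp (c*((j:ℝ)+4))) :=
            mul_lt_mul_of_pos_right hsB (Real.exp_pos _)
      have h4 : B * Real.exp (Real.exp (c*((j:ℝ)+4))) ≤ Y := by
        rw [hY, hB, hc, show j+3+1 = j+4 by omega]
        exact arith_big hα1 hα2 j
      linarith
    have h5 : 1 / genInv ψ Y ≤ 1 / B := one_div_le_one_div_of_le hB0 hgen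
    have hcα : (1/9:ℝ) ≤ c ^ α := by
      have h6 : c ^ (2:ℝ) ≤ c ^ α :=
        Real.rpow_le_rpow_of_exponent_ge hc0 (by rw [hc]; linarith) hα2.le
      have h7 : c ^ (2:ℝ) = c * c := by
        rw [show (2:ℝ) = ((2:ℕ):ℝ) by norm_num, Real.rpow_natCast]; ring
      have h8 : (1/9:ℝ) ≤ c * c := by rw [hc]; nlinarith
      rw [h7] at h6
      linarith
    have hmul : B = c ^ α * ((j:ℝ)+4) ^ α := by
      rw [hB, Real.mul_rpow hc0.le (by linarith)]
    have hjα : (0:ℝ) < ((j:ℝ)+4) ^ α := Real.rpow_pos_of_pos (by linarith) _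
    have h8 : 1 / B ≤ 36 / ((j:ℝ)+4) ^ α := by
      rw [hmul, div_le_div_iff₀ (by positivity) (by positivity)]
      nlinarith
    rw [hn4]
    linarith

lemma tsum_bound {α : ℝ} (hα1 : 1 < α) (hα2 : α < 2) :
    ∑' k : ℕ, ENNReal.ofReal (36 / ((k:ℝ)+1) ^ α) ≤ ENNReal.ofReal (72 / (α-1)) := by
  rw [ENNReal.tsum_eq_iSup_sum]
  apply iSup_le
  intro s
  obtain ⟨m, hm⟩ := s.exists_nat_subset_range
  calc ∑ k ∈ s, ENNReal.ofReal (36 / ((k:ℝ)+1) ^ α)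
      ≤ ∑ k ∈ Finset.range m, ENNReal.ofReal (36 / ((k:ℝ)+1) ^ α) :=
        Finset.sum_le_sum_of_subset hm
  _ = ENNReal.ofReal (∑ k ∈ Finset.range m, 36 / ((k:ℝ)+1) ^ α) :=
        (ENNReal.ofReal_sum_of_nonneg (fun k _ => by positivity)).symm
  _ ≤ ENNReal.ofReal (72 / (α-1)) := by
        apply ENNReal.ofReal_le_ofReal
        have h1 : ∑ k ∈ Finset.range m, 36 / ((k:ℝ)+1) ^ α
            = 36 * ∑ k ∈ Finset.range m, 1 / ((k:ℝ)+1) ^ α := by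
          rw [Finset.mul_sum]
          apply Finset.sum_congr rfl
          intro k _
          ring
        have h2 := sum_rpow_le hα1 hα2 m
        have h3 : (0:ℝ) < α - 1 := by linarith
        have h4 : (1:ℝ) ≤ 1/(α-1) := by
          rw [le_div_iff₀ h3]; linarith
        rw [h1]
        have h5 : 72 / (α-1) = 36 * (2 * (1/(α-1))) := by
          field_simp
          norm_num
        rw [h5]
        have h6 : ∑ k ∈ Finset.range m, 1 / ((k:ℝ)+1) ^ α ≤ 2 * (1/(α-1)) := by
          calc ∑ k ∈ Finset.range m, 1 / ((k:ℝ)+1) ^ α ≤ 1 + 1/(α-1) := h2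
          _ ≤ 2 * (1/(α-1)) := by linarith
        linarith

/-- For `φ(t) = t (log₂ t)^α`, the constant `c_φ` is at most a multiple of `1/(α-1)`. -/
theorem cPhi_loglog :
    ∃ C : ℝ, 0 < C ∧
      ∀ α : ℝ, 1 < α → α < 2 →
      ∀ ψ : ℝ → ℝ, ψ = youngConj (fun t => t * (log2f t) ^ α) →
        cPhi ψ ≤ ENNReal.ofReal (C / (α - 1)) := by
  refine ⟨72, by norm_num, ?_⟩
  intro α hα1 hα2 ψ hψ
  subst hψ
  rw [cPhi]
  calc ∑' k : ℕ, ENNReal.ofReal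
        (1 / genInv (youngConj (fun t => t * (log2f t) ^ α)) ((2:ℝ) ^ (2 ^ (k+1))))
      ≤ ∑' k : ℕ, ENNReal.ofReal (36 / ((k:ℝ)+1) ^ α) :=
        ENNReal.tsum_le_tsum (fun k => ENNReal.ofReal_le_ofReal (term_le hα1 hα2 k))
  _ ≤ ENNReal.ofReal (72 / (α-1)) := tsum_bound hα1 hα2

end
end
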